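/- Let P ∈ B₃⁺ be represented by a nondecreasing word of length n, let u ∈ ℤ, set α = δᵘ·P and s = u + n. Then α⁻¹ = δ^{-s}·τ^{-s}(P*), and τ^{-s}(P*) is a positive braid represented by a nondecreasing word of length n (so this expression is the Garside normal form of α⁻¹; here τ^{-s}(x) = δˢ·x·δ^{-s}). -/

import Mathlib

namespace Braid

/-- Relations of the dual (band-generator) presentation of the 3-braid group:
`a (i+1) * a i = a (i+2) * a (i+1)` for all `i : ZMod 3`. -/
def braidRels : Set (FreeGroup (ZMod 3)) :=
  { r | ∃ i : ZMod 3,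
      r = FreeGroup.of (i + 1) * FreeGroup.of i *
          (FreeGroup.of (i + 2) * FreeGroup.of (i + 1))⁻¹ }

/-- The 3-braid group with the band-generator presentation. -/
abbrev B3 := PresentedGroup braidRels

/-- The band generators `a i`, `i : ZMod 3`. -/
def a (i : ZMod 3) : B3 := PresentedGroup.of i

/-- The fundamental element `δ = a₂ * a₁`. -/
def δ : B3 := a 2 * a 1

/-- The submonoid of positive braids. -/
def Pos : Submonoid B3 := Submonoid.closure (Set.range a)

/-- The exponent-sum homomorphism, sending each generator to `1 : ℤ`. -/
def eHom : B3 →* Multiplicative ℤ :=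
  PresentedGroup.toGroup (f := fun _ => Multiplicative.ofAdd (1 : ℤ)) (by
    rintro r ⟨i, rfl⟩
    simp only [map_mul, map_inv, FreeGroup.lift_apply_of]
    group)

/-- The exponent sum (letter length on positive braids) as an integer. -/
def elen (x : B3) : ℤ := Multiplicative.toAdd (eHom x)

/-- The right complement `X* = X⁻¹ * δ^{e(X)}`. -/
def rc (X : B3) : B3 := X⁻¹ * δ ^ elen X

/-- The `n`-th power of the rotation automorphism `τ`: `τ^n (x) = δ^{-n} * x * δ^n`. -/
def tauPow (n : ℤ) (x : B3) : B3 := δ ^ (-n) * x * δ ^ n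

/-- The positive braid represented by a list of generator indices. -/
def wordProd (l : List (ZMod 3)) : B3 := (l.map a).prod

/-- A word is nondecreasing if each letter index is the previous one or the previous one
plus `1` (mod 3). -/
def NDWord (l : List (ZMod 3)) : Prop :=
  l.Chain' (fun x y => y = x ∨ y = x + 1)

/-- The syllable number of a word: the number of maximal constant blocks. -/
def syl : List (ZMod 3) → ℕ
  | [] => 0
  | [_] => 1
  | x :: y :: t => (if x = y then 0 else 1) + syl (y :: t)

/-- The permutations underlying the band generators. -/
def perm3 (i : ZMod 3) : Equiv.Perm (Fin 3) :=
  if i = 0 then Equiv.swap 0 2 else if i = 1 then Equiv.swap 0 1 else Equiv.swap 1 2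

lemma perm3_rel : ∀ i : ZMod 3,
    perm3 (i + 1) * perm3 i * (perm3 (i + 2) * perm3 (i + 1))⁻¹ = 1 := by decide

/-- The homomorphism to the symmetric group on 3 letters (underlying permutation). -/
def permOf : B3 →* Equiv.Perm (Fin 3) :=
  PresentedGroup.toGroup (f := perm3) (by
    rintro r ⟨i, rfl⟩
    simp only [map_mul, map_inv, FreeGroup.lift_apply_of]
    exact perm3_rel i)

/-- The set of band generators and their inverses. -/
def genSet : Set B3 := Set.range a ∪ Set.range (fun i => (a i)⁻¹)

/-- The band-generator word length of a 3-braid. -/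
noncomputable def wordLen (x : B3) : ℕ :=
  sInf { n | ∃ s : List B3, s.length = n ∧ (∀ g ∈ s, g ∈ genSet) ∧ s.prod = x }

/-- The minimal band-generator word length in the conjugacy class. -/
noncomputable def minConjLen (x : B3) : ℕ :=
  sInf { n | ∃ y, IsConj x y ∧ wordLen y = n }

/-- `α` is a summit element with summit exponent `u` if `δ^{-u} * α` is positive and `u` is
the maximal such exponent over the conjugacy class. -/
def IsSummit (α : B3) (u : ℤ) : Prop :=
  δ ^ (-u) * α ∈ Pos ∧ ∀ β : B3, IsConj α β → ∀ v : ℤ, δ ^ (-v) * β ∈ Pos → v ≤ u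

lemma braid_rel (i : ZMod 3) : a (i + 1) * a i = a (i + 2) * a (i + 1) := by
  have h : (QuotientGroup.mk (FreeGroup.of (i+1) * FreeGroup.of i *
      (FreeGroup.of (i+2) * FreeGroup.of (i+1))⁻¹) : B3) = 1 := by
    apply (QuotientGroup.eq_one_iff _).2
    exact Subgroup.subset_normalClosure ⟨i, rfl⟩
  have h2 : a (i+1) * a i * (a (i+2) * a (i+1))⁻¹ = 1 := by
    exact h
  exact mul_inv_eq_one.mp h2

lemma delta_eq (i : ZMod 3) : δ = a (i + 1) * a i := by
  have h0 : a 1 * a 0 = a 2 * a 1 := by exact braid_rel 0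
  have h1 : a 2 * a 1 = a 0 * a 2 := by exact braid_rel 1
  fin_cases i
  · exact h0.symm
  · rfl
  · exact h1

lemma a_mul_delta (j : ZMod 3) : a j * δ = δ * a (j + 1) := by
  have e1 : δ = a j * a (j + 2) := by
    have := delta_eq (j + 2)
    rwa [add_assoc, show (2:ZMod 3) + 1 = 0 from rfl, add_zero] at this
  calc a j * δ = a j * (a (j + 1) * a j) := by rw [← delta_eq j]
    _ = a j * (a (j + 2) * a (j + 1)) := by rw [braid_rel j]
    _ = (a j * a (j + 2)) * a (j + 1) := by rw [mul_assoc]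
    _ = δ * a (j + 1) := by rw [← e1]

lemma conj_a (j : ZMod 3) : δ⁻¹ * a j * δ = a (j + 1) := by
  rw [mul_assoc, a_mul_delta, ← mul_assoc, inv_mul_cancel, one_mul]

lemma conj_a' (j : ZMod 3) : δ * a j * δ⁻¹ = a (j - 1) := by
  have := conj_a (j - 1)
  rw [show j - 1 + 1 = j by ring] at this
  rw [← this]; group

lemma conj_zpow (k : ℤ) (j : ZMod 3) : δ ^ (-k) * a j * δ ^ k = a (j + (k : ZMod 3)) := by
  induction k using Int.induction_on with
  | zero => simp
  | succ n ih =>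
      have : δ ^ (-(n + 1 : ℤ)) * a j * δ ^ ((n : ℤ) + 1) =
          δ⁻¹ * (δ ^ (-(n : ℤ)) * a j * δ ^ (n : ℤ)) * δ := by group
      rw [this, ih, conj_a]
      push_cast
      ring_nf
  | pred n ih =>
      have : δ ^ (-(-(n : ℤ) - 1)) * a j * δ ^ (-(n : ℤ) - 1) =
          δ * (δ ^ (-(-(n : ℤ))) * a j * δ ^ (-(n : ℤ))) * δ⁻¹ := by group
      rw [this, ih, conj_a']
      push_cast
      ring_nf

lemma wordProd_nil : wordProd [] = 1 := rfl

lemma wordProd_cons (i : ZMod 3) (t : List (ZMod 3)) :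
    wordProd (i :: t) = a i * wordProd t := by simp [wordProd]

lemma wordProd_append (l₁ l₂ : List (ZMod 3)) :
    wordProd (l₁ ++ l₂) = wordProd l₁ * wordProd l₂ := by simp [wordProd]

lemma eHom_a (i : ZMod 3) : eHom (a i) = Multiplicative.ofAdd 1 := by
  simpa [eHom, a] using PresentedGroup.toGroup.of (rels := braidRels)
    (f := fun _ => Multiplicative.ofAdd (1 : ℤ)) (x := i)

lemma elen_a (i : ZMod 3) : elen (a i) = 1 := by simp [elen, eHom_a]

lemma elen_mul (x y : B3) : elen (x * y) = elen x + elen y := by simp [elen]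

lemma elen_word (l : List (ZMod 3)) : elen (wordProd l) = l.length := by
  induction l with
  | nil => simp [elen, wordProd_nil]
  | cons i t ih =>
      rw [wordProd_cons, elen_mul, elen_a, ih, List.length_cons]; push_cast; ring

lemma conj_zpow_word (k : ℤ) (l : List (ZMod 3)) :
    δ ^ (-k) * wordProd l * δ ^ k = wordProd (l.map (· + (k : ZMod 3))) := by
  induction l with
  | nil => simp [wordProd_nil]
  | cons i t ih =>
      rw [List.map_cons, wordProd_cons, wordProd_cons, ← ih, ← conj_zpow k i]
      group

def compWord : List (ZMod 3) → List (ZMod 3)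
  | [] => []
  | i :: t => compWord t ++ [i - 1 + (t.length : ZMod 3)]

lemma compWord_length (l : List (ZMod 3)) : (compWord l).length = l.length := by
  induction l with
  | nil => rfl
  | cons i t ih => simp [compWord, ih]

lemma a_inv_delta (i : ZMod 3) : (a i)⁻¹ * δ = a (i - 1) := by
  have : δ = a i * a (i - 1) := by
    have := delta_eq (i - 1)
    rwa [show i - 1 + 1 = i by ring] at this
  rw [this, ← mul_assoc, inv_mul_cancel, one_mul]

lemma rc_word (l : List (ZMod 3)) : rc (wordProd l) = wordProd (compWord l) := by
  induction l with
  | nil => simp [rc, wordProd_nil, elen, compWord]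
  | cons i t ih =>
      have hn : elen (wordProd (i :: t)) = 1 + (t.length : ℤ) := by
        rw [elen_word, List.length_cons]; push_cast; ring
      rw [rc, hn, wordProd_cons, mul_inv_rev]
      have : δ ^ (1 + (t.length : ℤ)) = δ * δ ^ (t.length : ℤ) := by
        rw [zpow_add, zpow_one]
      rw [this, show (wordProd t)⁻¹ * (a i)⁻¹ * (δ * δ ^ (t.length : ℤ)) =
        ((wordProd t)⁻¹ * δ ^ (t.length : ℤ)) *
          (δ ^ (-(t.length : ℤ)) * ((a i)⁻¹ * δ) * δ ^ (t.length : ℤ)) by group]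
      rw [a_inv_delta, conj_zpow, compWord, wordProd_append]
      congr 1
      · rw [← ih, rc, elen_word]


lemma ndword_map_add (c : ZMod 3) {l : List (ZMod 3)} (h : NDWord l) :
    NDWord (l.map (· + c)) := by
  unfold NDWord at *
  show List.IsChain _ _
  rw [List.isChain_map]
  refine h.imp ?_
  rintro x y (rfl | rfl)
  · left; rfl
  · right; ring

lemma compWord_nd : ∀ l : List (ZMod 3), NDWord l → NDWord (compWord l) := by
  intro l
  induction l with
  | nil => intro _; exact List.isChain_nil
  | cons i t ih =>
      intro h
      have ht : NDWord t := h.tail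
      have iht := ih ht
      show List.IsChain _ (compWord t ++ [i - 1 + (t.length : ZMod 3)])
      rw [List.isChain_append]
      refine ⟨iht, List.isChain_singleton _, ?_⟩
      intro x hx y hy
      match t with
      | [] => simp [compWord] at hx
      | j :: t' =>
          have hx' : x = j - 1 + (t'.length : ZMod 3) := by
            rw [show compWord (j :: t') = compWord t' ++ [j - 1 + (t'.length : ZMod 3)] from rfl,
              List.getLast?_concat] at hx
            exact (Option.some_inj.mp hx).symm
          have hy' : y = i - 1 + ((j :: t').length : ZMod 3) := by
            rw [List.head?_cons] at hy
            exact (Option.some_inj.mp (Option.mem_def.mp hy)).symm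
          have hij : j = i ∨ j = i + 1 := (List.isChain_cons_cons.mp h).1
          subst hx' hy'
          rcases hij with rfl | rfl
          · right; rw [List.length_cons]; push_cast; ring
          · left; rw [List.length_cons]; push_cast; ring


/-- Lemma 2.2(vi): if `α = δ^u P` with `P` nondecreasing of length `n` and `s = u + n`, then
`α⁻¹ = δ^{-s} τ^{-s}(P*)` is the Garside normal form of `α⁻¹`. -/
theorem normal_form_inv (l : List (ZMod 3)) (hl : NDWord l) (u : ℤ) (α : B3)
    (hα : α = δ ^ u * wordProd l) (s : ℤ) (hs : s = u + l.length) :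
    α⁻¹ = δ ^ (-s) * tauPow (-s) (rc (wordProd l)) ∧
    ∃ l' : List (ZMod 3), NDWord l' ∧ l'.length = l.length ∧
      wordProd l' = tauPow (-s) (rc (wordProd l)) := by
  constructor
  · subst hα hs
    simp only [tauPow, rc, elen_word]
    group
  · refine ⟨(compWord l).map (· + (((-s : ℤ)) : ZMod 3)),
      ndword_map_add _ (compWord_nd l hl), by simp [compWord_length], ?_⟩
    rw [tauPow, rc_word, conj_zpow_word]
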